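/- Let n ≥ 4 and let π be the permutation representation of S_n on ℂⁿ. Then for every τ ∈ S_n, the operator π(τ) lies in the linear span of {π(σ) : σ ∈ A_n}, i.e. the subalgebra of M_n(ℂ) generated by {π(σ) : σ ∈ A_n} contains π(τ) for all τ ∈ S_n. -/

import Mathlib

open Matrix

/-- The permutation matrix of `σ`: entry `(i, j)` is `1` if `σ j = i` and `0` otherwise. -/
def permMat (n : ℕ) (σ : Equiv.Perm (Fin n)) : Matrix (Fin n) (Fin n) ℂ :=
  Matrix.of fun i j => if σ j = i then 1 else 0

theorem permMat_mul (n : ℕ) (σ ρ : Equiv.Perm (Fin n)) :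
    permMat n (σ * ρ) = permMat n σ * permMat n ρ := by
  ext i j
  simp only [permMat, Matrix.mul_apply, Matrix.of_apply, Equiv.Perm.mul_apply]
  rw [Finset.sum_eq_single (ρ j)]
  · simp
    split_ifs with h <;> simp [h]
  · intro k _ hk
    rw [if_neg (Ne.symm hk), mul_zero]
  · simp

/-- The key linear relation: `2·π((i1 i2))` is an integer combination of matrices of
even permutations (two 3-cycles, their squares, minus two double transpositions). -/
theorem permMat_swap_rel (n : ℕ) (i0 i1 i2 i3 : Fin n)
    (h01 : i0 ≠ i1) (h02 : i0 ≠ i2) (h03 : i0 ≠ i3)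
    (h12 : i1 ≠ i2) (h13 : i1 ≠ i3) (h23 : i2 ≠ i3) :
    (2 : ℂ) • permMat n (Equiv.swap i1 i2) =
      permMat n (Equiv.swap i0 i1 * Equiv.swap i1 i2)
      + permMat n ((Equiv.swap i0 i1 * Equiv.swap i1 i2) * (Equiv.swap i0 i1 * Equiv.swap i1 i2))
      + permMat n (Equiv.swap i1 i2 * Equiv.swap i2 i3)
      + permMat n ((Equiv.swap i1 i2 * Equiv.swap i2 i3) * (Equiv.swap i1 i2 * Equiv.swap i2 i3))
      - permMat n (Equiv.swap i0 i1 * Equiv.swap i2 i3)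
      - permMat n (Equiv.swap i0 i2 * Equiv.swap i1 i3) := by
  ext i j
  simp only [permMat, Matrix.add_apply, Matrix.sub_apply, Matrix.smul_apply, Matrix.of_apply,
    Equiv.Perm.mul_apply, smul_eq_mul]
  by_cases hj0 : j = i0
  · subst hj0
    have a1 : Equiv.swap i1 i2 j = j := Equiv.swap_apply_of_ne_of_ne h01 h02
    have a2 : Equiv.swap i1 i2 i1 = i2 := Equiv.swap_apply_left _ _
    have a3 : Equiv.swap j i1 j = i1 := Equiv.swap_apply_left _ _
    have a4 : Equiv.swap j i1 i2 = i2 :=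
      Equiv.swap_apply_of_ne_of_ne (Ne.symm h02) (Ne.symm h12)
    have a5 : Equiv.swap i2 i3 j = j := Equiv.swap_apply_of_ne_of_ne h02 h03
    have a6 : Equiv.swap i1 i3 j = j := Equiv.swap_apply_of_ne_of_ne h01 h03
    have a7 : Equiv.swap j i2 j = i2 := Equiv.swap_apply_left _ _
    simp only [a1, a2, a3, a4, a5, a6, a7]
    ring
  · by_cases hj1 : j = i1
    · subst hj1
      have b1 : Equiv.swap j i2 j = i2 := Equiv.swap_apply_left _ _
      have b2 : Equiv.swap i2 i3 j = j := Equiv.swap_apply_of_ne_of_ne h12 h13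
      have b3 : Equiv.swap i0 j i2 = i2 :=
        Equiv.swap_apply_of_ne_of_ne (Ne.symm h02) (Ne.symm h12)
      have b4 : Equiv.swap j i2 i2 = j := Equiv.swap_apply_right _ _
      have b5 : Equiv.swap i0 j j = i0 := Equiv.swap_apply_right _ _
      have b6 : Equiv.swap i2 i3 i2 = i3 := Equiv.swap_apply_left _ _
      have b7 : Equiv.swap j i2 i3 = i3 :=
        Equiv.swap_apply_of_ne_of_ne (Ne.symm h13) (Ne.symm h23)
      have b8 : Equiv.swap j i3 j = i3 := Equiv.swap_apply_left _ _
      have b9 : Equiv.swap i0 i2 i3 = i3 :=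
        Equiv.swap_apply_of_ne_of_ne (Ne.symm h03) (Ne.symm h23)
      simp only [b1, b2, b3, b4, b5, b6, b7, b8, b9]
      ring
    · by_cases hj2 : j = i2
      · subst hj2
        have c1 : Equiv.swap i1 j j = i1 := Equiv.swap_apply_right _ _
        have c2 : Equiv.swap i0 i1 i1 = i0 := Equiv.swap_apply_right _ _
        have c3 : Equiv.swap i1 j i0 = i0 :=
          Equiv.swap_apply_of_ne_of_ne h01 h02
        have c4 : Equiv.swap i0 i1 i0 = i1 := Equiv.swap_apply_left _ _
        have c5 : Equiv.swap j i3 j = i3 := Equiv.swap_apply_left _ _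
        have c6 : Equiv.swap i1 j i3 = i3 :=
          Equiv.swap_apply_of_ne_of_ne (Ne.symm h13) (Ne.symm h23)
        have c7 : Equiv.swap j i3 i3 = j := Equiv.swap_apply_right _ _
        have c8 : Equiv.swap i0 i1 i3 = i3 :=
          Equiv.swap_apply_of_ne_of_ne (Ne.symm h03) (Ne.symm h13)
        have c9 : Equiv.swap i1 i3 j = j :=
          Equiv.swap_apply_of_ne_of_ne (Ne.symm h12) h23
        have c10 : Equiv.swap i0 j j = i0 := Equiv.swap_apply_right _ _
        simp only [c1, c2, c3, c4, c5, c6, c7, c8, c9, c10]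
        ring
      · by_cases hj3 : j = i3
        · subst hj3
          have d1 : Equiv.swap i1 i2 j = j :=
            Equiv.swap_apply_of_ne_of_ne (Ne.symm h13) (Ne.symm h23)
          have d2 : Equiv.swap i0 i1 j = j :=
            Equiv.swap_apply_of_ne_of_ne (Ne.symm h03) (Ne.symm h13)
          have d3 : Equiv.swap i2 j j = i2 := Equiv.swap_apply_right _ _
          have d4 : Equiv.swap i1 i2 i2 = i1 := Equiv.swap_apply_right _ _
          have d5 : Equiv.swap i2 j i1 = i1 :=
            Equiv.swap_apply_of_ne_of_ne h12 h13
          have d6 : Equiv.swap i1 i2 i1 = i2 := Equiv.swap_apply_left _ _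
          have d7 : Equiv.swap i0 i1 i2 = i2 :=
            Equiv.swap_apply_of_ne_of_ne (Ne.symm h02) (Ne.symm h12)
          have d8 : Equiv.swap i1 j j = i1 := Equiv.swap_apply_right _ _
          have d9 : Equiv.swap i0 i2 i1 = i1 :=
            Equiv.swap_apply_of_ne_of_ne (Ne.symm h01) h12
          simp only [d1, d2, d3, d4, d5, d6, d7, d8, d9]
          ring
        · have e1 : Equiv.swap i1 i2 j = j := Equiv.swap_apply_of_ne_of_ne hj1 hj2
          have e2 : Equiv.swap i0 i1 j = j := Equiv.swap_apply_of_ne_of_ne hj0 hj1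
          have e3 : Equiv.swap i2 i3 j = j := Equiv.swap_apply_of_ne_of_ne hj2 hj3
          have e4 : Equiv.swap i1 i3 j = j := Equiv.swap_apply_of_ne_of_ne hj1 hj3
          have e5 : Equiv.swap i0 i2 j = j := Equiv.swap_apply_of_ne_of_ne hj0 hj2
          simp only [e1, e2, e3, e4, e5]
          ring

/-- For `n ≥ 4` and every `τ ∈ S_n`, the operator `π(τ)` lies in the linear span of
`{π(σ) : σ ∈ A_n}` in `M_n(ℂ)`. -/
theorem permMat_mem_span_alternating (n : ℕ) (hn : 4 ≤ n) (τ : Equiv.Perm (Fin n)) :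
    permMat n τ ∈ Submodule.span ℂ
      {M : Matrix (Fin n) (Fin n) ℂ | ∃ σ ∈ alternatingGroup (Fin n), M = permMat n σ} := by
  set S : Set (Matrix (Fin n) (Fin n) ℂ) :=
    {M : Matrix (Fin n) (Fin n) ℂ | ∃ σ ∈ alternatingGroup (Fin n), M = permMat n σ} with hS
  have hmem : ∀ σ : Equiv.Perm (Fin n), σ ∈ alternatingGroup (Fin n) →
      permMat n σ ∈ Submodule.span ℂ S :=
    fun σ hσ => Submodule.subset_span ⟨σ, hσ, rfl⟩
  by_cases hτ : τ ∈ alternatingGroup (Fin n)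
  · exact hmem τ hτ
  · have hτs : Equiv.Perm.sign τ = -1 := by
      rcases Int.units_eq_one_or (Equiv.Perm.sign τ) with h | h
      · exact absurd (Equiv.Perm.mem_alternatingGroup.2 h) hτ
      · exact h
    obtain ⟨i0, i1, i2, i3, h01, h02, h03, h12, h13, h23⟩ :
        ∃ i0 i1 i2 i3 : Fin n, i0 ≠ i1 ∧ i0 ≠ i2 ∧ i0 ≠ i3 ∧ i1 ≠ i2 ∧ i1 ≠ i3 ∧ i2 ≠ i3 :=
      ⟨⟨0, by omega⟩, ⟨1, by omega⟩, ⟨2, by omega⟩, ⟨3, by omega⟩,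
        by simp [Fin.ext_iff], by simp [Fin.ext_iff], by simp [Fin.ext_iff],
        by simp [Fin.ext_iff], by simp [Fin.ext_iff], by simp [Fin.ext_iff]⟩
    have evmem : ∀ x y z w : Fin n, x ≠ y → z ≠ w →
        Equiv.swap x y * Equiv.swap z w ∈ alternatingGroup (Fin n) := by
      intro x y z w hxy hzw
      rw [Equiv.Perm.mem_alternatingGroup, _root_.map_mul,
        Equiv.Perm.sign_swap hxy, Equiv.Perm.sign_swap hzw]
      decide
    have hs : permMat n (Equiv.swap i1 i2) ∈ Submodule.span ℂ S := by
      have h2 : permMat n (Equiv.swap i1 i2)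
          = (2 : ℂ)⁻¹ • ((2 : ℂ) • permMat n (Equiv.swap i1 i2)) := by
        rw [smul_smul]; norm_num
      rw [h2, permMat_swap_rel n i0 i1 i2 i3 h01 h02 h03 h12 h13 h23]
      refine Submodule.smul_mem _ _ ?_
      have m1 := hmem _ (evmem i0 i1 i1 i2 h01 h12)
      have m2 := hmem _ (Subgroup.mul_mem _ (evmem i0 i1 i1 i2 h01 h12)
        (evmem i0 i1 i1 i2 h01 h12))
      have m3 := hmem _ (evmem i1 i2 i2 i3 h12 h23)
      have m4 := hmem _ (Subgroup.mul_mem _ (evmem i1 i2 i2 i3 h12 h23)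
        (evmem i1 i2 i2 i3 h12 h23))
      have m5 := hmem _ (evmem i0 i1 i2 i3 h01 h23)
      have m6 := hmem _ (evmem i0 i2 i1 i3 h02 h13)
      exact sub_mem (sub_mem (add_mem (add_mem (add_mem m1 m2) m3) m4) m5) m6
    set s := Equiv.swap i1 i2 with hsdef
    have hts : τ * s ∈ alternatingGroup (Fin n) := by
      rw [Equiv.Perm.mem_alternatingGroup, _root_.map_mul, hτs, Equiv.Perm.sign_swap h12]
      decide
    have hτeq : τ = (τ * s) * s := by
      rw [mul_assoc, hsdef, Equiv.swap_mul_self, mul_one]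
    rw [hτeq, permMat_mul]
    refine Submodule.span_induction (p := fun M _ => permMat n (τ * s) * M ∈ Submodule.span ℂ S)
      ?_ ?_ ?_ ?_ hs
    · rintro M ⟨σ, hσ, rfl⟩
      rw [← permMat_mul]
      exact hmem _ (Subgroup.mul_mem _ hts hσ)
    · simp
    · intro x y _ _ hx hy
      rw [mul_add]; exact add_mem hx hy
    · intro c x _ hx
      rw [mul_smul_comm]; exact Submodule.smul_mem _ _ hx
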